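/- For all integers n ≥ 0 and k ≥ 1, the total number of k-down steps, summed over all Dyck paths from (0,0) to (2n,0), multiplied by 2n+1, equals (2k+1)·C(2n+1, n+k+1); equivalently, this total equals ((2k+1)/(2n+1))·C(2n+1, n+k+1). -/
import Mathlib


open Finset

attribute [local instance] Classical.propDecidable

/-- The height of the lattice path `p` (where `true` is a northeast step `(1,1)` and
`false` is a southeast step `(1,-1)`) after its first `i` steps. -/
def pathHeight {n : ℕ} (p : Fin n → Bool) (i : ℕ) : ℤ :=
  ∑ j ∈ Finset.univ.filter (fun j : Fin n => (j : ℕ) < i), (if p j then (1 : ℤ) else -1)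

/-- `p` is a generalized Dyck path from `(0,0)` to `(n,h)`: it ends at height `h`
and never goes below the x-axis. -/
def IsGDPath {n : ℕ} (h : ℤ) (p : Fin n → Bool) : Prop :=
  pathHeight p n = h ∧ ∀ i ≤ n, 0 ≤ pathHeight p i

/-- The set of generalized Dyck paths from `(0,0)` to `(n,h)`. -/
noncomputable def gdPaths (n : ℕ) (h : ℤ) : Finset (Fin n → Bool) :=
  Finset.univ.filter (IsGDPath h)

/-- The number of `k`-down steps of `p`, i.e. southeast steps from height `k` to `k-1`. -/
noncomputable def downSteps {n : ℕ} (k : ℤ) (p : Fin n → Bool) : ℕ :=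
  (Finset.univ.filter (fun i : Fin n => p i = false ∧ pathHeight p (i : ℕ) = k)).card

/-- Binomial coefficient on integers, `0` unless `0 ≤ b ≤ a`. -/
def binom (a b : ℤ) : ℤ :=
  if 0 ≤ b ∧ b ≤ a then (a.toNat.choose b.toNat : ℤ) else 0

lemma pathHeight_zero {n : ℕ} (p : Fin n → Bool) : pathHeight p 0 = 0 := by
  simp [pathHeight]

lemma pathHeight_succ {n : ℕ} (p : Fin n → Bool) {i : ℕ} (hi : i < n) :
    pathHeight p (i + 1) = pathHeight p i + (if p ⟨i, hi⟩ then (1:ℤ) else -1) := by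
  unfold pathHeight
  rw [show (Finset.univ.filter (fun j : Fin n => (j : ℕ) < i + 1)) =
      insert ⟨i, hi⟩ (Finset.univ.filter (fun j : Fin n => (j : ℕ) < i)) from ?_]
  · rw [Finset.sum_insert (by simp)]
    ring
  · ext j
    simp only [Finset.mem_insert, Finset.mem_filter, Finset.mem_univ, true_and]
    constructor
    · intro hj
      rcases Nat.lt_succ_iff_lt_or_eq.mp hj with h' | h'
      · exact Or.inr h'
      · exact Or.inl (Fin.ext h')
    · rintro (rfl | hj)
      · exact Nat.lt_succ_self i
      · exact Nat.lt_succ_of_lt hj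

lemma pathHeight_of_le {n : ℕ} (p : Fin n → Bool) {i : ℕ} (hi : n ≤ i) :
    pathHeight p i = pathHeight p n := by
  unfold pathHeight
  congr 1
  ext j
  simp only [Finset.mem_filter, Finset.mem_univ, true_and]
  exact ⟨fun _ => j.isLt, fun _ => lt_of_lt_of_le j.isLt hi⟩

lemma pathHeight_snoc {n : ℕ} (q : Fin n → Bool) (b : Bool) :
    ∀ i ≤ n, pathHeight (Fin.snoc q b : Fin (n+1) → Bool) i = pathHeight q i := by
  intro i
  induction i with
  | zero => intro _; simp [pathHeight_zero]
  | succ i ih =>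
    intro hi
    have hi' : i < n := hi
    rw [pathHeight_succ _ (Nat.lt_succ_of_lt hi'), pathHeight_succ q hi',
      ih (le_of_lt hi')]
    have hs : (Fin.snoc q b : Fin (n+1) → Bool) ⟨i, Nat.lt_succ_of_lt hi'⟩ = q ⟨i, hi'⟩ := by
      have hcast : (⟨i, Nat.lt_succ_of_lt hi'⟩ : Fin (n+1)) = Fin.castSucc ⟨i, hi'⟩ := rfl
      rw [hcast, Fin.snoc_castSucc]
    rw [hs]

lemma pathHeight_snoc_last {n : ℕ} (q : Fin n → Bool) (b : Bool) :
    pathHeight (Fin.snoc q b : Fin (n+1) → Bool) (n+1)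
      = pathHeight q n + (if b then (1:ℤ) else -1) := by
  rw [pathHeight_succ _ (Nat.lt_succ_self n), pathHeight_snoc q b n le_rfl]
  have hs : (Fin.snoc q b : Fin (n+1) → Bool) ⟨n, Nat.lt_succ_self n⟩ = b := by
    have hcast : (⟨n, Nat.lt_succ_self n⟩ : Fin (n+1)) = Fin.last n := rfl
    rw [hcast, Fin.snoc_last]
  rw [hs]

lemma snoc_mem_gdPaths_iff {n : ℕ} {h : ℤ} (h0 : 0 ≤ h) (q : Fin n → Bool) (b : Bool) :
    (Fin.snoc q b : Fin (n+1) → Bool) ∈ gdPaths (n+1) h ↔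
      q ∈ gdPaths n (h - (if b then 1 else -1)) := by
  simp only [gdPaths, Finset.mem_filter, Finset.mem_univ, true_and, IsGDPath]
  constructor
  · rintro ⟨hend, hpos⟩
    refine ⟨?_, fun i hi => ?_⟩
    · rw [pathHeight_snoc_last] at hend; omega
    · rw [← pathHeight_snoc q b i hi]
      exact hpos i (le_trans hi (Nat.le_succ n))
  · rintro ⟨hend, hpos⟩
    refine ⟨?_, fun i hi => ?_⟩
    · rw [pathHeight_snoc_last, hend]; ring
    · rcases Nat.lt_succ_iff_lt_or_eq.mp (Nat.lt_succ_of_le hi) with hi' | rfl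
      · rw [pathHeight_snoc q b i (by omega)]; exact hpos i (by omega)
      · rw [pathHeight_snoc_last, hend]
        have : h - (if b then (1:ℤ) else -1) + (if b then (1:ℤ) else -1) = h := by ring
        rw [this]; exact h0

lemma snoc_inj {n : ℕ} (b : Bool) : Function.Injective (fun q : Fin n → Bool => (Fin.snoc q b : Fin (n+1) → Bool)) := by
  intro q q' hqq
  funext i
  have := congrFun hqq (Fin.castSucc i)
  simpa [Fin.snoc_castSucc] using this

lemma gdPaths_succ {n : ℕ} {h : ℤ} (h0 : 0 ≤ h) :
    gdPaths (n+1) h =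
      (gdPaths n (h-1)).image (fun q => (Fin.snoc q true : Fin (n+1) → Bool)) ∪
      (gdPaths n (h+1)).image (fun q => (Fin.snoc q false : Fin (n+1) → Bool)) := by
  ext p
  simp only [Finset.mem_union, Finset.mem_image]
  constructor
  · intro hp
    rcases hb : p (Fin.last n) with _ | _
    · right
      refine ⟨Fin.init p, ?_, by rw [← hb]; exact Fin.snoc_init_self p⟩
      have := (snoc_mem_gdPaths_iff h0 (Fin.init p) false).mp
        (by rw [show (Fin.snoc (Fin.init p) false : Fin (n+1) → Bool) = p from by
          rw [← hb]; exact Fin.snoc_init_self p]; exact hp)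
      simpa using this
    · left
      refine ⟨Fin.init p, ?_, by rw [← hb]; exact Fin.snoc_init_self p⟩
      have := (snoc_mem_gdPaths_iff h0 (Fin.init p) true).mp
        (by rw [show (Fin.snoc (Fin.init p) true : Fin (n+1) → Bool) = p from by
          rw [← hb]; exact Fin.snoc_init_self p]; exact hp)
      simpa using this
  · rintro (⟨q, hq, rfl⟩ | ⟨q, hq, rfl⟩)
    · exact (snoc_mem_gdPaths_iff h0 q true).mpr (by simpa using hq)
    · exact (snoc_mem_gdPaths_iff h0 q false).mpr (by simpa using hq)

lemma gdPaths_images_disjoint {n : ℕ} {h : ℤ} :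
    Disjoint ((gdPaths n (h-1)).image (fun q => (Fin.snoc q true : Fin (n+1) → Bool)))
      ((gdPaths n (h+1)).image (fun q => (Fin.snoc q false : Fin (n+1) → Bool))) := by
  rw [Finset.disjoint_left]
  rintro p hp hp'
  simp only [Finset.mem_image] at hp hp'
  obtain ⟨q, _, rfl⟩ := hp
  obtain ⟨q', _, h2⟩ := hp'
  have := congrFun h2 (Fin.last n)
  simp [Fin.snoc_last] at this

lemma card_gdPaths_succ {n : ℕ} {h : ℤ} (h0 : 0 ≤ h) :
    (gdPaths (n+1) h).card = (gdPaths n (h-1)).card + (gdPaths n (h+1)).card := by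
  rw [gdPaths_succ h0, Finset.card_union_of_disjoint gdPaths_images_disjoint,
    Finset.card_image_of_injective _ (snoc_inj true),
    Finset.card_image_of_injective _ (snoc_inj false)]

lemma downSteps_eq_sum {n : ℕ} (k : ℤ) (p : Fin n → Bool) :
    downSteps k p = ∑ i : Fin n, if p i = false ∧ pathHeight p (i : ℕ) = k then 1 else 0 := by
  rw [downSteps, Finset.card_filter]

lemma downSteps_snoc {n : ℕ} (k : ℤ) (q : Fin n → Bool) (b : Bool) :
    downSteps k (Fin.snoc q b : Fin (n+1) → Bool) =
      downSteps k q + (if b = false ∧ pathHeight q n = k then 1 else 0) := by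
  rw [downSteps_eq_sum, downSteps_eq_sum, Fin.sum_univ_castSucc]
  congr 1
  · apply Finset.sum_congr rfl
    intro i _
    have h1 : (Fin.snoc q b : Fin (n+1) → Bool) (Fin.castSucc i) = q i := by simp
    have h2 : pathHeight (Fin.snoc q b : Fin (n+1) → Bool) ((Fin.castSucc i : Fin (n+1)) : ℕ)
        = pathHeight q (i : ℕ) := by
      have : ((Fin.castSucc i : Fin (n+1)) : ℕ) = (i : ℕ) := rfl
      rw [this, pathHeight_snoc q b _ (le_of_lt i.isLt)]
    rw [h1, h2]
  · have h1 : (Fin.snoc q b : Fin (n+1) → Bool) (Fin.last n) = b := by simp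
    have h2 : pathHeight (Fin.snoc q b : Fin (n+1) → Bool) ((Fin.last n : Fin (n+1)) : ℕ)
        = pathHeight q n := by
      have : ((Fin.last n : Fin (n+1)) : ℕ) = n := rfl
      rw [this, pathHeight_snoc q b n le_rfl]
    rw [h1, h2]

lemma sum_downSteps_succ {n : ℕ} (k : ℤ) {h : ℤ} (h0 : 0 ≤ h) :
    ∑ p ∈ gdPaths (n+1) h, downSteps k p =
      (∑ p ∈ gdPaths n (h-1), downSteps k p) + ((∑ p ∈ gdPaths n (h+1), downSteps k p) +
        (if h + 1 = k then (gdPaths n (h+1)).card else 0)) := by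
  rw [gdPaths_succ h0, Finset.sum_union gdPaths_images_disjoint,
    Finset.sum_image (fun a _ b _ hab => snoc_inj true hab),
    Finset.sum_image (fun a _ b _ hab => snoc_inj false hab)]
  congr 1
  · apply Finset.sum_congr rfl
    intro q _
    rw [downSteps_snoc]
    simp
  · have hterm : ∀ q ∈ gdPaths n (h+1), downSteps k (Fin.snoc q false : Fin (n+1) → Bool)
        = downSteps k q + (if h + 1 = k then 1 else 0) := by
      intro q hq
      have hq' : pathHeight q n = h + 1 := by
        simp only [gdPaths, Finset.mem_filter, IsGDPath] at hq
        exact hq.2.1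
      rw [downSteps_snoc]
      congr 1
      simp [hq']
    rw [Finset.sum_congr rfl hterm, Finset.sum_add_distrib, Finset.sum_const,
      smul_eq_mul]
    congr 1
    by_cases hc : h + 1 = k <;> simp [hc]


def Ncl (n h : ℕ) : ℤ :=
  if (n + h) % 2 = 0 then ((n.choose ((n+h)/2) : ℤ) - (n.choose ((n+h)/2 + 1) : ℤ)) else 0

def Wcl (j a b : ℕ) : ℤ :=
  if (j + a + b) % 2 = 0 ∧ a ≤ j + b then
    ((j.choose ((j+b-a)/2) : ℤ) - (j.choose ((j+a+b)/2 + 1) : ℤ)) else 0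

lemma choose_cast_zero_of_lt {n k : ℕ} (h : n < k) : (n.choose k : ℤ) = 0 := by
  rw [Nat.choose_eq_zero_of_lt h]; rfl

lemma Ncl_zero (h : ℕ) : Ncl 0 h = if h = 0 then 1 else 0 := by
  unfold Ncl
  by_cases hh : h = 0
  · subst hh; norm_num
  · rw [if_neg hh]
    by_cases hp : (0 + h) % 2 = 0
    · rw [if_pos hp]
      have h1 : 0 < (0 + h) / 2 := by omega
      rw [choose_cast_zero_of_lt (by omega), choose_cast_zero_of_lt (by omega)]
      ring
    · rw [if_neg hp]

lemma Ncl_succ_succ (n h : ℕ) : Ncl (n+1) (h+1) = Ncl n h + Ncl n (h+2) := by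
  unfold Ncl
  by_cases hp : (n + h) % 2 = 0
  · rw [if_pos (by omega : (n+1+(h+1)) % 2 = 0), if_pos hp, if_pos (by omega : (n+(h+2)) % 2 = 0)]
    have e1 : (n+1+(h+1))/2 = (n+h)/2 + 1 := by omega
    have e2 : (n+(h+2))/2 = (n+h)/2 + 1 := by omega
    rw [e1, e2]
    set m := (n+h)/2 with hm
    have p1 : (n+1).choose (m+1) = n.choose m + n.choose (m+1) := Nat.choose_succ_succ n m
    have p2 : (n+1).choose (m+1+1) = n.choose (m+1) + n.choose (m+1+1) :=
      Nat.choose_succ_succ n (m+1)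
    push_cast [p1, p2]
    ring
  · rw [if_neg (by omega), if_neg hp, if_neg (by omega)]
    ring

lemma Ncl_succ_zero (n : ℕ) : Ncl (n+1) 0 = Ncl n 1 := by
  unfold Ncl
  by_cases hp : n % 2 = 1
  · rw [if_pos (by omega : (n+1+0) % 2 = 0), if_pos (by omega : (n+1) % 2 = 0)]
    have hm1 : 1 ≤ (n+1+0)/2 := by omega
    obtain ⟨m, hm⟩ : ∃ m, (n+1+0)/2 = m + 1 := ⟨(n+1+0)/2 - 1, by omega⟩
    have e2 : (n+1)/2 = m + 1 := by omega
    have hn : n = 2*m + 1 := by omega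
    rw [hm]
    have p1 : (n+1).choose (m+1) = n.choose m + n.choose (m+1) := Nat.choose_succ_succ n m
    have p2 : (n+1).choose (m+1+1) = n.choose (m+1) + n.choose (m+1+1) :=
      Nat.choose_succ_succ n (m+1)
    have psym : n.choose m = n.choose (m+1) := by
      have h1 : m + 1 ≤ n := by omega
      have := Nat.choose_symm h1
      rw [show n - (m+1) = m by omega] at this
      exact this
    push_cast [p1, p2, psym]
    ring
  · rw [if_neg (by omega), if_neg (by omega)]

lemma Wcl_zero (a b : ℕ) : Wcl 0 a b = if a = b then 1 else 0 := by
  unfold Wcl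
  by_cases hab : a = b
  · subst hab
    rw [if_pos (⟨by omega, by omega⟩ : (0+a+a) % 2 = 0 ∧ a ≤ 0+a), if_pos rfl]
    rw [show (0 + a - a)/2 = 0 by omega]
    rw [choose_cast_zero_of_lt (show 0 < (0+a+a)/2 + 1 by omega)]
    norm_num
  · rw [if_neg hab]
    by_cases hc : (0 + a + b) % 2 = 0 ∧ a ≤ 0 + b
    · rw [if_pos hc]
      have hb : a + 2 ≤ b := by omega
      rw [choose_cast_zero_of_lt (show 0 < (0+b-a)/2 by omega),
        choose_cast_zero_of_lt (show 0 < (0+a+b)/2 + 1 by omega)]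
      ring
    · rw [if_neg hc]

lemma Wcl_succ_succ (j a b : ℕ) : Wcl (j+1) a (b+1) = Wcl j a b + Wcl j a (b+2) := by
  unfold Wcl
  by_cases hp : (j + a + b) % 2 = 0
  · by_cases h1 : a ≤ j + b
    · rw [if_pos ⟨by omega, by omega⟩, if_pos ⟨hp, h1⟩, if_pos ⟨by omega, by omega⟩]
      obtain ⟨u, hu⟩ : ∃ u, j + b - a = 2 * u := ⟨(j+b-a)/2, by omega⟩
      have e1 : (j+1+(b+1)-a)/2 = u + 1 := by omega
      have e2 : (j+b-a)/2 = u := by omega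
      have e3 : (j+(b+2)-a)/2 = u + 1 := by omega
      have f1 : (j+1+a+(b+1))/2 + 1 = (j+a+b)/2 + 2 := by omega
      have f3 : (j+a+(b+2))/2 + 1 = (j+a+b)/2 + 2 := by omega
      rw [e1, e2, e3, f1, f3]
      set v := (j+a+b)/2 with hv
      have p1 : (j+1).choose (u+1) = j.choose u + j.choose (u+1) := Nat.choose_succ_succ j u
      have p2 : (j+1).choose (v+2) = j.choose (v+1) + j.choose (v+2) :=
        Nat.choose_succ_succ j (v+1)
      push_cast [p1, p2]
      ring
    · by_cases h2 : a = j + b + 2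
      · rw [if_pos ⟨by omega, by omega⟩, if_neg (by omega), if_pos ⟨by omega, by omega⟩]
        rw [show (j+1+(b+1)-a)/2 = 0 by omega, show (j+(b+2)-a)/2 = 0 by omega]
        rw [choose_cast_zero_of_lt (show j+1 < (j+1+a+(b+1))/2+1 by omega),
          choose_cast_zero_of_lt (show j < (j+a+(b+2))/2+1 by omega)]
        simp
      · have h3 : j + b + 2 < a := by omega
        rw [if_neg (by omega), if_neg (by omega), if_neg (by omega)]
        ring
  · rw [if_neg (by omega), if_neg (by omega), if_neg (by omega)]
    ring

lemma Wcl_succ_zero (j a : ℕ) : Wcl (j+1) a 0 = Wcl j a 1 := by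
  unfold Wcl
  by_cases hp : (j + 1 + a) % 2 = 0
  · by_cases h1 : a ≤ j + 1
    · by_cases h2 : a = j + 1
      · rw [if_pos ⟨by omega, by omega⟩, if_pos ⟨by omega, by omega⟩]
        simp only [Nat.add_zero]
        rw [show (j+1-a)/2 = 0 by omega]
        rw [choose_cast_zero_of_lt (show j+1 < (j+1+a)/2+1 by omega),
          choose_cast_zero_of_lt (show j < (j+a+1)/2+1 by omega)]
        simp
      · have h3 : a + 2 ≤ j + 1 := by omega
        rw [if_pos ⟨by omega, by omega⟩, if_pos ⟨by omega, by omega⟩]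
        obtain ⟨u, hu⟩ : ∃ u, j + 1 - a = 2 * (u + 1) := ⟨(j+1-a)/2 - 1, by omega⟩
        simp only [Nat.add_zero]
        have e2 : (j+1-a)/2 = u + 1 := by omega
        have f1 : (j+1+a)/2 + 1 = (j+a+1)/2 + 1 := by omega
        rw [e2, f1]
        set v := (j+a+1)/2 with hv
        have hvj : v ≤ j := by omega
        have p1 : (j+1).choose (u+1) = j.choose u + j.choose (u+1) := Nat.choose_succ_succ j u
        have p2 : (j+1).choose (v+1) = j.choose v + j.choose (v+1) := Nat.choose_succ_succ j v
        have psym : j.choose u = j.choose v := by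
          have := Nat.choose_symm hvj
          rw [show j - v = u by omega] at this
          exact this
        push_cast [p1, p2, psym]
        ring
    · rw [if_neg (by omega), if_neg (by omega)]
  · rw [if_neg (by omega), if_neg (by omega)]

lemma Wcl_b_zero (j a : ℕ) : Wcl j a 0 = Ncl j a := by
  unfold Wcl Ncl
  by_cases hp : (j + a) % 2 = 0
  · by_cases h1 : a ≤ j
    · rw [if_pos ⟨by omega, by omega⟩, if_pos (by omega)]
      have hsym : j.choose ((j+0-a)/2) = j.choose ((j+a)/2) := by
        have hle : (j+a)/2 ≤ j := by omega
        have := Nat.choose_symm hle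
        rw [show j - (j+a)/2 = (j+0-a)/2 by omega] at this
        exact this
      rw [hsym, show (j+a+0)/2 = (j+a)/2 by omega]
    · rw [if_neg (by omega), if_pos (by omega)]
      rw [choose_cast_zero_of_lt (show j < (j+a)/2 by omega),
        choose_cast_zero_of_lt (by omega)]
      ring
  · rw [if_neg (by omega), if_neg (by omega)]

lemma Ncl_one (h : ℕ) : Ncl 1 h = if h = 1 then 1 else 0 := by
  unfold Ncl
  by_cases hh : h = 1
  · subst hh; norm_num
  · rw [if_neg hh]
    by_cases hp : (1 + h) % 2 = 0
    · rw [if_pos hp]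
      rw [choose_cast_zero_of_lt (by omega), choose_cast_zero_of_lt (by omega)]
      ring
    · rw [if_neg hp]

lemma S_identity (a : ℕ) : ∀ M : ℕ, ∀ b : ℕ,
    (∑ m ∈ Finset.range (M+1), Ncl m a * Ncl (M-m) b) = Ncl (M+1) (a+b+1) := by
  intro M
  induction M with
  | zero =>
    intro b
    have h0 : (∑ m ∈ Finset.range (0+1), Ncl m a * Ncl (0-m) b) = Ncl 0 a * Ncl 0 b := by
      simp [Finset.sum_range_one]
    rw [h0, Ncl_zero, Ncl_zero, Ncl_one]
    split_ifs with h1 h2 h3 <;> first | (exfalso; omega) | norm_num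
  | succ M ih =>
    intro b
    rw [Finset.sum_range_succ]
    have hlast : Ncl (M+1-(M+1)) b = if b = 0 then 1 else 0 := by
      rw [show M+1-(M+1) = 0 by omega, Ncl_zero]
    rcases b with _ | c
    · have hrest : ∀ m ∈ Finset.range (M+1),
          Ncl m a * Ncl (M+1-m) 0 = Ncl m a * Ncl (M-m) 1 := by
        intro m hm
        simp only [Finset.mem_range] at hm
        rw [show M+1-m = (M-m)+1 by omega, Ncl_succ_zero]
      rw [Finset.sum_congr rfl hrest, hlast, ih 1]
      rw [if_pos rfl, mul_one]
      rw [show a+0+1 = a+1 by ring, show a+1+1 = a+2 by ring,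
        Ncl_succ_succ (M+1) a]
      ring
    · have hrest : ∀ m ∈ Finset.range (M+1),
          Ncl m a * Ncl (M+1-m) (c+1) = Ncl m a * Ncl (M-m) c + Ncl m a * Ncl (M-m) (c+2) := by
        intro m hm
        simp only [Finset.mem_range] at hm
        rw [show M+1-m = (M-m)+1 by omega, Ncl_succ_succ]
        ring
      rw [Finset.sum_congr rfl hrest, Finset.sum_add_distrib, ih c, ih (c+2), hlast]
      rw [if_neg (by omega), mul_zero, add_zero]
      rw [show a+(c+2)+1 = a+c+3 by ring, show a+(c+1)+1 = (a+c+1)+1 by ring,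
        Ncl_succ_succ (M+1) (a+c+1), show a+c+1+2 = a+c+3 by ring]

lemma gdPaths_neg {n : ℕ} {h : ℤ} (hneg : h < 0) : gdPaths n h = ∅ := by
  ext p
  simp only [gdPaths, Finset.mem_filter, Finset.mem_univ, true_and, IsGDPath,
    Finset.notMem_empty, iff_false]
  rintro ⟨hend, hpos⟩
  have := hpos n le_rfl
  omega

lemma card_gdPaths_zero (h : ℤ) : ((gdPaths 0 h).card : ℤ) = if h = 0 then 1 else 0 := by
  by_cases hh : h = 0
  · subst hh
    rw [if_pos rfl]
    have : gdPaths 0 (0:ℤ) = Finset.univ := by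
      ext p
      simp only [gdPaths, Finset.mem_filter, Finset.mem_univ, true_and, IsGDPath, iff_true]
      exact ⟨pathHeight_zero p, fun i hi => by
        rw [Nat.le_zero.mp hi, pathHeight_zero]⟩
    rw [this]
    simp
  · rw [if_neg hh]
    have : gdPaths 0 h = ∅ := by
      ext p
      simp only [gdPaths, Finset.mem_filter, Finset.mem_univ, true_and, IsGDPath,
        Finset.notMem_empty, iff_false]
      rintro ⟨hend, -⟩
      exact hh (by rw [← hend, pathHeight_zero])
    rw [this]
    simp

lemma card_gdPaths : ∀ n : ℕ, ∀ h : ℕ, ((gdPaths n (h:ℤ)).card : ℤ) = Ncl n h := by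
  intro n
  induction n with
  | zero =>
    intro h
    rw [card_gdPaths_zero, Ncl_zero]
    by_cases hh : h = 0
    · rw [if_pos (show ((h:ℕ):ℤ) = 0 by exact_mod_cast hh), if_pos hh]
    · rw [if_neg (show ¬(((h:ℕ):ℤ) = 0) by exact_mod_cast hh), if_neg hh]
  | succ n ih =>
    intro h
    have hsplit := card_gdPaths_succ (n := n) (h := ((h:ℕ):ℤ)) (by positivity)
    rcases h with _ | h'
    · rw [gdPaths_neg (show ((0:ℕ):ℤ) - 1 < 0 by norm_num),
        show ((0:ℕ):ℤ) + 1 = ((1:ℕ):ℤ) by norm_num] at hsplit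
      have hca := ih 1
      rw [Ncl_succ_zero, ← hca, hsplit]
      push_cast [Finset.card_empty]
      ring
    · rw [show ((h'+1:ℕ):ℤ) - 1 = ((h':ℕ):ℤ) by push_cast; ring,
        show ((h'+1:ℕ):ℤ) + 1 = ((h'+2:ℕ):ℤ) by push_cast; ring] at hsplit
      rw [Ncl_succ_succ, ← ih h', ← ih (h'+2), hsplit]
      push_cast
      ring

lemma sum_downSteps_eq (k : ℕ) (hk : 1 ≤ k) : ∀ n : ℕ, ∀ h : ℕ,
    ((∑ p ∈ gdPaths n (h:ℤ), downSteps (k:ℤ) p : ℕ) : ℤ) =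
      ∑ m ∈ Finset.range n, Ncl m k * Wcl (n-1-m) (k-1) h := by
  intro n
  induction n with
  | zero =>
    intro h
    rw [Finset.range_zero, Finset.sum_empty]
    have hz : ∀ p ∈ gdPaths 0 ((h:ℕ):ℤ), downSteps (k:ℤ) p = 0 := by
      intro p _
      rw [downSteps]
      simp
    rw [Finset.sum_congr rfl hz]
    simp
  | succ n ih =>
    intro h
    have hsplit := sum_downSteps_succ (n := n) (k := ((k:ℕ):ℤ)) (h := ((h:ℕ):ℤ))
      (by positivity)
    rw [Finset.sum_range_succ]
    have hrest : ∀ m ∈ Finset.range n,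
        Ncl m k * Wcl ((n+1)-1-m) (k-1) h = Ncl m k * Wcl ((n-1-m)+1) (k-1) h := by
      intro m hm
      simp only [Finset.mem_range] at hm
      rw [show (n+1)-1-m = (n-1-m)+1 by omega]
    rw [Finset.sum_congr rfl hrest, show (n+1)-1-n = 0 by omega]
    rcases h with _ | h'
    · -- h = 0
      rw [gdPaths_neg (show ((0:ℕ):ℤ) - 1 < 0 by norm_num), Finset.sum_empty,
        show ((0:ℕ):ℤ) + 1 = ((1:ℕ):ℤ) by norm_num] at hsplit
      have hWrw : ∀ m ∈ Finset.range n,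
          Ncl m k * Wcl ((n-1-m)+1) (k-1) 0 = Ncl m k * Wcl (n-1-m) (k-1) 1 := by
        intro m _
        rw [Wcl_succ_zero]
      rw [Finset.sum_congr rfl hWrw]
      have hW0 : Wcl 0 (k-1) 0 = if k = 1 then 1 else 0 := by
        rw [Wcl_zero]
        by_cases hk1 : k = 1
        · rw [if_pos (by omega), if_pos hk1]
        · rw [if_neg (by omega), if_neg hk1]
      rw [hW0]
      have hih := ih 1
      have hca := card_gdPaths n 1
      by_cases hk1 : k = 1
      · rw [if_pos (show ((1:ℕ):ℤ) = ((k:ℕ):ℤ) by exact_mod_cast hk1.symm)] at hsplit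
        rw [if_pos hk1, mul_one, hsplit]
        rw [show Ncl n k = Ncl n 1 by rw [hk1]]
        push_cast at hih hca ⊢
        linarith [hih, hca]
      · rw [if_neg (show ¬(((1:ℕ):ℤ) = ((k:ℕ):ℤ)) by
            exact_mod_cast fun c => hk1 (by exact_mod_cast c.symm))] at hsplit
        rw [if_neg hk1, mul_zero, hsplit]
        push_cast at hih ⊢
        linarith [hih]
    · -- h = h'+1
      rw [show ((h'+1:ℕ):ℤ) - 1 = ((h':ℕ):ℤ) by push_cast; ring,
        show ((h'+1:ℕ):ℤ) + 1 = ((h'+2:ℕ):ℤ) by push_cast; ring] at hsplit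
      have hWrw : ∀ m ∈ Finset.range n,
          Ncl m k * Wcl ((n-1-m)+1) (k-1) (h'+1) =
            Ncl m k * Wcl (n-1-m) (k-1) h' + Ncl m k * Wcl (n-1-m) (k-1) (h'+2) := by
        intro m _
        rw [Wcl_succ_succ]
        ring
      rw [Finset.sum_congr rfl hWrw, Finset.sum_add_distrib]
      have hW0 : Wcl 0 (k-1) (h'+1) = if k = h'+2 then 1 else 0 := by
        rw [Wcl_zero]
        by_cases hkh : k = h'+2
        · rw [if_pos (by omega), if_pos hkh]
        · rw [if_neg (by omega), if_neg hkh]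
      rw [hW0]
      have hih1 := ih h'
      have hih2 := ih (h'+2)
      have hca := card_gdPaths n (h'+2)
      by_cases hkh : k = h'+2
      · rw [if_pos (show ((h'+2:ℕ):ℤ) = ((k:ℕ):ℤ) by exact_mod_cast hkh.symm)] at hsplit
        rw [if_pos hkh, mul_one, hsplit]
        rw [show Ncl n k = Ncl n (h'+2) by rw [hkh]]
        push_cast at hih1 hih2 hca ⊢
        linarith [hih1, hih2, hca]
      · rw [if_neg (show ¬(((h'+2:ℕ):ℤ) = ((k:ℕ):ℤ)) by
            exact_mod_cast fun c => hkh (by exact_mod_cast c.symm))] at hsplit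
        rw [if_neg hkh, mul_zero, hsplit]
        push_cast at hih1 hih2 ⊢
        linarith [hih1, hih2]

lemma finalNumeric (n k : ℕ) : (2*(n:ℤ)+1) * Ncl (2*n) (2*k) =
    (2*(k:ℤ)+1) * (((2*n+1).choose (n+k+1) : ℕ) : ℤ) := by
  unfold Ncl
  rw [if_pos (show (2*n+2*k) % 2 = 0 by omega), show (2*n+2*k)/2 = n+k by omega]
  by_cases hkn : k ≤ n
  · have E1 : (2*n+1) * (2*n).choose (n+k) = (2*n+1).choose (n+k+1) * (n+k+1) := by
      have := Nat.add_one_mul_choose_eq (2*n) (n+k)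
      simpa [Nat.succ_eq_add_one] using this
    have E2 : (2*n+1) * (2*n).choose (n+k+1) = (2*n+1).choose (n+k+2) * (n+k+2) := by
      have := Nat.add_one_mul_choose_eq (2*n) (n+k+1)
      simpa [Nat.succ_eq_add_one] using this
    have E3 : (2*n+1).choose (n+k+2) * (n+k+2) = (2*n+1).choose (n+k+1) * (n-k) := by
      have := Nat.choose_succ_right_eq (2*n+1) (n+k+1)
      rw [show (2*n+1) - (n+k+1) = n-k by omega] at this
      exact this
    have E2' : (2*n+1) * (2*n).choose (n+k+1) = (2*n+1).choose (n+k+1) * (n-k) :=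
      E2.trans E3
    zify at E1
    zify [hkn] at E2'
    linear_combination E1 - E2'
  · rw [Nat.choose_eq_zero_of_lt (show 2*n < n+k by omega),
      Nat.choose_eq_zero_of_lt (show 2*n < n+k+1 by omega),
      Nat.choose_eq_zero_of_lt (show 2*n+1 < n+k+1 by omega)]
    push_cast
    ring


/-- (2n+1) times the total number of k-down steps over all Dyck paths from (0,0) to (2n,0)
equals (2k+1)·C(2n+1, n+k+1). -/
theorem stmt3 (n k : ℕ) (hk : 1 ≤ k) :
    (2 * n + 1) * (∑ p ∈ gdPaths (2 * n) 0, downSteps (k : ℤ) p) =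
      (2 * k + 1) * Nat.choose (2 * n + 1) (n + k + 1) := by
  have key := sum_downSteps_eq k hk (2*n) 0
  rw [show ((0:ℕ):ℤ) = (0:ℤ) from Nat.cast_zero] at key
  have hW : ∀ m ∈ Finset.range (2*n), Ncl m k * Wcl (2*n-1-m) (k-1) 0 =
      Ncl m k * Ncl (2*n-1-m) (k-1) := by
    intro m _
    rw [Wcl_b_zero]
  rw [Finset.sum_congr rfl hW] at key
  rcases Nat.eq_zero_or_pos n with rfl | hn
  · rw [Nat.choose_eq_zero_of_lt (show 2*0+1 < 0+k+1 by omega), mul_zero]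
    have hz : ∀ p ∈ gdPaths 0 (0:ℤ), downSteps (k:ℤ) p = 0 := by
      intro p _
      rw [downSteps]
      simp
    rw [Finset.sum_congr rfl hz]
    simp
  · have hS := S_identity k (2*n-1) (k-1)
    rw [show 2*n-1+1 = 2*n by omega, show k+(k-1)+1 = 2*k by omega] at hS
    rw [hS] at key
    have hfin := finalNumeric n k
    rw [← key] at hfin
    exact_mod_cast hfin
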